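/- arXiv:2307.01179 — 7 statements merged into one kernel-verified Lean document; each statement's English description precedes it below -/
import Mathlib

section
/- Fix v > 0 and define U_v(x) := v·x − Φ₊(x) for x ∈ [2, ∞). Then U_v attains its maximum on [2, ∞) at the unique point x_v* = 2·cosh(v/2), and the maximum value is U_v(x_v*) = 4·sinh(v/2). -/
/-- Inverse hyperbolic cosine, `arcosh x = log (x + √(x² − 1))`. -/
noncomputable def arcosh (x : ℝ) : ℝ := Real.log (x + Real.sqrt (x ^ 2 - 1))

/-- The upper-tail rate function `Φ₊(μ) = 2μ·arcosh(μ/2) − 2√(μ² − 4)`. -/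
noncomputable def PhiPlus (μ : ℝ) : ℝ :=
  2 * μ * arcosh (μ / 2) - 2 * Real.sqrt (μ ^ 2 - 4)

lemma arcosh_cosh {s : ℝ} (hs : 0 ≤ s) : arcosh (Real.cosh s) = s := by
  unfold arcosh
  have h1 : Real.cosh s ^ 2 - 1 = Real.sinh s ^ 2 := by
    have := Real.cosh_sq_sub_sinh_sq s; nlinarith
  rw [h1, Real.sqrt_sq (Real.sinh_nonneg_iff.mpr hs), Real.cosh_add_sinh, Real.log_exp]

lemma exp_arcosh {y : ℝ} (hy : 1 ≤ y) :
    Real.exp (arcosh y) = y + Real.sqrt (y ^ 2 - 1) := by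
  have h0 : (0:ℝ) ≤ Real.sqrt (y ^ 2 - 1) := Real.sqrt_nonneg _
  exact Real.exp_log (by linarith)

lemma cosh_sinh_arcosh {y : ℝ} (hy : 1 ≤ y) :
    Real.cosh (arcosh y) = y ∧ Real.sinh (arcosh y) = Real.sqrt (y ^ 2 - 1) := by
  set r := Real.sqrt (y ^ 2 - 1) with hrdef
  have hr2 : r ^ 2 = y ^ 2 - 1 := Real.sq_sqrt (by nlinarith)
  have hr0 : 0 ≤ r := Real.sqrt_nonneg _
  have hpos : 0 < y + r := by linarith
  have he : Real.exp (arcosh y) = y + r := exp_arcosh hy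
  have hne : Real.exp (-arcosh y) = y - r := by
    rw [Real.exp_neg, he, inv_eq_iff_eq_inv, eq_comm, inv_eq_iff_eq_inv,
      eq_comm]
    field_simp
    nlinarith
  constructor
  · rw [Real.cosh_eq, he, hne]; ring
  · rw [Real.sinh_eq, he, hne]; ring

lemma arcosh_nonneg {y : ℝ} (hy : 1 ≤ y) : 0 ≤ arcosh y := by
  have h0 : (0:ℝ) ≤ Real.sqrt (y ^ 2 - 1) := Real.sqrt_nonneg _
  exact Real.log_nonneg (by linarith)

/-- Key calculus inequality: for `s > 0`, `t ≥ 0`, `t ≠ s`,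
`(s - t)·cosh t + sinh t < sinh s`. -/
lemma key_ineq {s : ℝ} (hs : 0 < s) {t : ℝ} (ht : 0 ≤ t) (hts : t ≠ s) :
    (s - t) * Real.cosh t + Real.sinh t < Real.sinh s := by
  set h : ℝ → ℝ := fun u => Real.sinh u + (s - u) * Real.cosh u with hdef
  have hderiv : ∀ u : ℝ, HasDerivAt h ((s - u) * Real.sinh u) u := by
    intro u
    have h1 := Real.hasDerivAt_sinh u
    have h2 : HasDerivAt (fun x : ℝ => (s - x) * Real.cosh x)
        ((-1) * Real.cosh u + (s - u) * Real.sinh u) u :=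
      ((hasDerivAt_id u).const_sub s).mul (Real.hasDerivAt_cosh u)
    have := h1.add h2
    exact this.congr_deriv (by ring)
  have hcont : Continuous h := by
    fun_prop
  have hhs : h s = Real.sinh s := by simp [hdef]
  have key : h t < h s := by
    rcases lt_or_gt_of_ne hts with hlt | hgt
    · have hmono : StrictMonoOn h (Set.Icc 0 s) := by
        apply strictMonoOn_of_deriv_pos (convex_Icc 0 s) hcont.continuousOn
        intro x hx
        rw [interior_Icc] at hx
        rw [(hderiv x).deriv]
        exact mul_pos (by linarith [hx.2]) (Real.sinh_pos_iff.mpr hx.1)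
      exact hmono ⟨ht, hlt.le⟩ ⟨hs.le, le_rfl⟩ hlt
    · have hanti : StrictAntiOn h (Set.Ici s) := by
        apply strictAntiOn_of_deriv_neg (convex_Ici s) hcont.continuousOn
        intro x hx
        rw [interior_Ici] at hx
        rw [(hderiv x).deriv]
        have hxs : s < x := hx
        have : 0 < Real.sinh x := Real.sinh_pos_iff.mpr (lt_trans hs hxs)
        nlinarith
      exact hanti (Set.self_mem_Ici) (Set.mem_Ici.mpr hgt.le) hgt
  calc (s - t) * Real.cosh t + Real.sinh t = h t := by rw [hdef]; ring
    _ < h s := key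
    _ = Real.sinh s := hhs

/-- Reduction of `U_v` to the parametrization `x = 2 cosh t`. -/
lemma U_eq {x : ℝ} (hx : 2 ≤ x) (v : ℝ) :
    v * x - PhiPlus x =
      4 * ((v / 2 - arcosh (x / 2)) * Real.cosh (arcosh (x / 2))
        + Real.sinh (arcosh (x / 2))) ∧
    x = 2 * Real.cosh (arcosh (x / 2)) := by
  have hy : (1:ℝ) ≤ x / 2 := by linarith
  obtain ⟨hc, hsin⟩ := cosh_sinh_arcosh hy
  have hx2 : x = 2 * Real.cosh (arcosh (x / 2)) := by rw [hc]; ring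
  refine ⟨?_, hx2⟩
  have hsqrt : Real.sqrt (x ^ 2 - 4) = 2 * Real.sqrt ((x / 2) ^ 2 - 1) := by
    rw [show x ^ 2 - 4 = (2 * Real.sqrt ((x / 2) ^ 2 - 1)) ^ 2 by
      rw [mul_pow, Real.sq_sqrt (by nlinarith)]; ring]
    exact Real.sqrt_sq (by positivity)
  unfold PhiPlus
  rw [hsqrt, ← hsin, hc]
  ring

/-- For `v > 0`, the function `U_v(x) = v·x − Φ₊(x)` attains its maximum on `[2, ∞)`
at the unique point `x_v* = 2·cosh(v/2)`, with maximum value `4·sinh(v/2)`. -/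
theorem Uv_max (v : ℝ) (hv : 0 < v) :
    2 * Real.cosh (v / 2) ∈ Set.Ici (2 : ℝ) ∧
    (∀ x ∈ Set.Ici (2 : ℝ),
      v * x - PhiPlus x ≤ v * (2 * Real.cosh (v / 2)) - PhiPlus (2 * Real.cosh (v / 2))) ∧
    v * (2 * Real.cosh (v / 2)) - PhiPlus (2 * Real.cosh (v / 2)) = 4 * Real.sinh (v / 2) ∧
    (∀ x ∈ Set.Ici (2 : ℝ),
      v * x - PhiPlus x = 4 * Real.sinh (v / 2) → x = 2 * Real.cosh (v / 2)) := by
  have hs : 0 < v / 2 := by linarith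
  have hcosh1 : (1:ℝ) ≤ Real.cosh (v / 2) := Real.one_le_cosh _
  have hxstar : (2:ℝ) ≤ 2 * Real.cosh (v / 2) := by linarith
  -- value at the maximizer
  have hval : v * (2 * Real.cosh (v / 2)) - PhiPlus (2 * Real.cosh (v / 2))
      = 4 * Real.sinh (v / 2) := by
    obtain ⟨h1, _⟩ := U_eq hxstar v
    have harc : arcosh (2 * Real.cosh (v / 2) / 2) = v / 2 := by
      rw [show 2 * Real.cosh (v / 2) / 2 = Real.cosh (v / 2) by ring,
        arcosh_cosh hs.le]
    rw [h1, harc]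
    ring
  refine ⟨hxstar, ?_, hval, ?_⟩
  · intro x hx
    have hx2 : (2:ℝ) ≤ x := hx
    obtain ⟨h1, _⟩ := U_eq hx2 v
    rw [h1, hval]
    set t := arcosh (x / 2) with htdef
    have ht0 : 0 ≤ t := arcosh_nonneg (by linarith)
    rcases eq_or_ne t (v / 2) with heq | hne
    · rw [heq]
      exact le_of_eq (by ring)
    · have := key_ineq hs ht0 hne
      nlinarith
  · intro x hx heq
    have hx2 : (2:ℝ) ≤ x := hx
    obtain ⟨h1, h2⟩ := U_eq hx2 v
    set t := arcosh (x / 2) with htdef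
    have ht0 : 0 ≤ t := arcosh_nonneg (by linarith)
    by_contra hne
    have htne : t ≠ v / 2 := by
      intro hcontra
      apply hne
      rw [h2, hcontra]
    have := key_ineq hs ht0 htne
    rw [h1] at heq
    nlinarith
end

section
/- For every μ ≥ 2 one has Φ₊(μ) = sup_{p > 0} ( p·μ − 4·sinh(p/2) ), i.e. Φ₊ on [2, ∞) is the Legendre–Fenchel transform, over positive arguments, of the function Υ(p) = 4·sinh(p/2). -/
lemma arcosh_base_pos {x : ℝ} (hx : 1 ≤ x) : 0 < x + Real.sqrt (x ^ 2 - 1) := by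
  have := Real.sqrt_nonneg (x ^ 2 - 1); linarith

lemma arcosh_inv_base {x : ℝ} (hx : 1 ≤ x) :
    (x + Real.sqrt (x ^ 2 - 1))⁻¹ = x - Real.sqrt (x ^ 2 - 1) := by
  have h0 : (0:ℝ) ≤ x ^ 2 - 1 := by nlinarith
  have hs : Real.sqrt (x ^ 2 - 1) ^ 2 = x ^ 2 - 1 := Real.sq_sqrt h0
  refine inv_eq_of_mul_eq_one_right ?_
  nlinarith [hs]

lemma cosh_arcosh {x : ℝ} (hx : 1 ≤ x) : Real.cosh (arcosh x) = x := by
  rw [arcosh, Real.cosh_log (arcosh_base_pos hx), arcosh_inv_base hx]; ring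

lemma sinh_arcosh {x : ℝ} (hx : 1 ≤ x) : Real.sinh (arcosh x) = Real.sqrt (x ^ 2 - 1) := by
  rw [arcosh, Real.sinh_log (arcosh_base_pos hx), arcosh_inv_base hx]; ring

lemma arcosh_nonneg_s3 {x : ℝ} (hx : 1 ≤ x) : 0 ≤ arcosh x := by
  refine Real.log_nonneg ?_
  have := Real.sqrt_nonneg (x ^ 2 - 1); linarith

lemma arcosh_pos {x : ℝ} (hx : 1 < x) : 0 < arcosh x := by
  refine Real.log_pos ?_
  have : 0 < Real.sqrt (x ^ 2 - 1) := Real.sqrt_pos.2 (by nlinarith)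
  linarith

/-- key concavity inequality -/
lemma key_ineq_s3 {t : ℝ} (ht : 0 ≤ t) {q : ℝ} (hq : 0 ≤ q) :
    q * Real.cosh t - Real.sinh q ≤ t * Real.cosh t - Real.sinh t := by
  set F : ℝ → ℝ := fun y => Real.sinh y - y * Real.cosh t with hFdef
  have hF : ∀ x : ℝ, HasDerivAt F (Real.cosh x - Real.cosh t) x := by
    intro x
    exact ((Real.hasDerivAt_sinh x).sub ((hasDerivAt_id x).mul_const (Real.cosh t))).congr_deriv (by ring)
  have hcont : Continuous F :=
    Real.continuous_sinh.sub (continuous_id.mul continuous_const)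
  have hgoal : F t ≤ F q → q * Real.cosh t - Real.sinh q ≤ t * Real.cosh t - Real.sinh t := by
    intro h; simp only [hFdef] at h; linarith
  apply hgoal
  rcases le_total t q with h | h
  · have hmono : MonotoneOn F (Set.Ici t) := by
      apply monotoneOn_of_deriv_nonneg (convex_Ici t) hcont.continuousOn
      · intro x _; exact (hF x).differentiableAt.differentiableWithinAt
      · intro x hx
        rw [interior_Ici] at hx
        rw [(hF x).deriv]
        have : Real.cosh t ≤ Real.cosh x := by
          rw [Real.cosh_le_cosh, abs_of_nonneg ht, abs_of_nonneg (le_of_lt (lt_of_le_of_lt ht hx))]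
          exact le_of_lt hx
        linarith
    exact hmono (Set.self_mem_Ici) h h
  · have hanti : AntitoneOn F (Set.Icc 0 t) := by
      apply antitoneOn_of_deriv_nonpos (convex_Icc 0 t) hcont.continuousOn
      · intro x _; exact (hF x).differentiableAt.differentiableWithinAt
      · intro x hx
        rw [interior_Icc] at hx
        rw [(hF x).deriv]
        have : Real.cosh x ≤ Real.cosh t := by
          rw [Real.cosh_le_cosh, abs_of_nonneg ht, abs_of_nonneg (le_of_lt hx.1)]
          exact le_of_lt hx.2
        linarith
    exact hanti ⟨hq, h⟩ (Set.right_mem_Icc.2 ht) h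

/-- For `μ ≥ 2`, `Φ₊(μ) = sup_{p > 0} ( p·μ − 4·sinh(p/2) )`: on `[2, ∞)`, `Φ₊` is the
Legendre–Fenchel transform, over positive arguments, of `Υ(p) = 4·sinh(p/2)`. -/
theorem phiPlus_eq_legendre (μ : ℝ) (hμ : 2 ≤ μ) :
    PhiPlus μ = sSup ((fun p : ℝ => p * μ - 4 * Real.sinh (p / 2)) '' Set.Ioi 0) := by
  set f : ℝ → ℝ := fun p => p * μ - 4 * Real.sinh (p / 2) with hfdef
  set S := f '' Set.Ioi 0 with hSdef
  have hne : S.Nonempty := ⟨f 1, 1, by norm_num, rfl⟩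
  set t := arcosh (μ / 2) with htdef
  have hx : (1:ℝ) ≤ μ / 2 := by linarith
  have ht : 0 ≤ t := arcosh_nonneg_s3 hx
  have hcosh : Real.cosh t = μ / 2 := cosh_arcosh hx
  have hsinh : Real.sinh t = Real.sqrt (μ ^ 2 - 4) / 2 := by
    rw [htdef, sinh_arcosh hx, show (μ/2) ^ 2 - 1 = (μ ^ 2 - 4) / 4 by ring,
      Real.sqrt_div' _ (by norm_num : (0:ℝ) ≤ 4),
      show Real.sqrt 4 = 2 by
        rw [show (4:ℝ) = 2 ^ 2 by norm_num, Real.sqrt_sq (by norm_num : (0:ℝ) ≤ 2)]]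
  have hPhi : PhiPlus μ = 2 * μ * t - 4 * Real.sinh t := by
    rw [PhiPlus, ← htdef, hsinh]; ring
  have hub : ∀ y ∈ S, y ≤ PhiPlus μ := by
    rintro y ⟨p, hp, rfl⟩
    have hp0 : (0:ℝ) < p := hp
    have := key_ineq_s3 ht (le_of_lt (half_pos hp0))
    simp only [hfdef]
    rw [hPhi]
    have hμeq : μ = 2 * Real.cosh t := by rw [hcosh]; ring
    nlinarith [this]
  have hlub : IsLUB S (PhiPlus μ) := by
    constructor
    · exact hub
    · intro b hb
      have hball : ∀ p : ℝ, 0 < p → p * μ - 4 * Real.sinh (p / 2) ≤ b := fun p hp =>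
        hb ⟨p, hp, rfl⟩
      rcases eq_or_lt_of_le hμ with heq | hlt
      · -- μ = 2, t = 0, PhiPlus μ = 0
        have ht0 : t = 0 := by
          rw [htdef, ← heq, arcosh]
          norm_num
        have hPhi0 : PhiPlus μ = 0 := by
          rw [hPhi, ht0]; simp
        rw [hPhi0]
        have htend : Filter.Tendsto f (nhdsWithin 0 (Set.Ioi 0)) (nhds 0) := by
          have hc : Continuous f :=
            (continuous_id.mul continuous_const).sub
              (continuous_const.mul (Real.continuous_sinh.comp (continuous_id.div_const 2)))
          have h2 : Filter.Tendsto f (nhdsWithin 0 (Set.Ioi 0)) (nhds (f 0)) :=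
            (hc.tendsto 0).mono_left nhdsWithin_le_nhds
          simpa [hfdef] using h2
        refine le_of_tendsto htend ?_
        filter_upwards [self_mem_nhdsWithin] with p hp
        exact hball p hp
      · -- μ > 2, sup attained at p = 2t
        have htpos : 0 < t := arcosh_pos (by linarith)
        have : f (2 * t) ≤ b := hball (2 * t) (by linarith)
        have heval : f (2 * t) = PhiPlus μ := by
          simp only [hfdef]
          rw [hPhi, show 2 * t / 2 = t by ring]
          ring
        linarith [heval ▸ this]
  exact (hlub.csSup_eq hne).symm
end

section
/- Fix D ∈ ℝ, v > 0 and t > 0. Then the sum over i ∈ ℕ (i ≥ 0) and j ∈ ℤ subject to the constraint i + j + 1 ≤ D of the terms J_{i+j+1}(2t)²·e^{v(j + 1/2)} is at most e^{Dv + 2v}/(e^v − 1)². (This is the bound ∑_{a∈ℕ'} ∑_{ℓ∈ℤ' : a+ℓ ≤ D} J_{a+ℓ}(2t)²·e^{vℓ} ≤ e^{Dv+2v}/(e^v−1)², where ℕ' = {1/2, 3/2, …}, ℤ' = ℤ + 1/2, a = i + 1/2 and ℓ = j + 1/2.) -/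
/-- The Bessel function of the first kind of integer order:
`J_m(x) = (1/π) ∫₀^π cos(mθ − x·sin θ) dθ`. -/
noncomputable def besselJ (m : ℤ) (x : ℝ) : ℝ :=
  (1 / Real.pi) * ∫ θ in (0 : ℝ)..Real.pi, Real.cos (m * θ - x * Real.sin θ)

def besselReindex : ℕ × ℤ ≃ ℕ × ℤ where
  toFun p := (p.1, p.1 + p.2 + 1)
  invFun q := (q.1, q.2 - q.1 - 1)
  left_inv p := by obtain ⟨a, b⟩ := p; simp only [Prod.mk.injEq]; exact ⟨trivial, by ring⟩
  right_inv q := by obtain ⟨a, b⟩ := q; simp only [Prod.mk.injEq]; exact ⟨trivial, by ring⟩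

lemma besselJ_sq_le_one (m : ℤ) (x : ℝ) : besselJ m x ^ 2 ≤ 1 := by
  have hπ : (0:ℝ) < Real.pi := Real.pi_pos
  have hI : ‖∫ θ in (0:ℝ)..Real.pi, Real.cos (↑m * θ - x * Real.sin θ)‖ ≤ 1 * |Real.pi - 0| := by
    apply intervalIntegral.norm_integral_le_of_norm_le_const
    intro θ _
    simpa using Real.abs_cos_le_one _
  have habs : |besselJ m x| ≤ 1 := by
    rw [besselJ, abs_mul, abs_of_pos (show (0:ℝ) < 1 / Real.pi by positivity)]
    rw [Real.norm_eq_abs, sub_zero, abs_of_pos hπ] at hI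
    calc 1 / Real.pi * |∫ θ in (0:ℝ)..Real.pi, Real.cos (↑m * θ - x * Real.sin θ)|
        ≤ 1 / Real.pi * (1 * Real.pi) := by
          exact mul_le_mul_of_nonneg_left hI (by positivity)
      _ = 1 := by field_simp
  have h := abs_le.mp habs
  nlinarith [h.1, h.2]

/-- For `D ∈ ℝ`, `v > 0` and `t > 0`, the sum over `a ∈ ℕ' = {1/2,3/2,…}` (written `a = i+1/2`)
and `ℓ ∈ ℤ' = ℤ + 1/2` (written `ℓ = j+1/2`) with `a + ℓ ≤ D` of
`J_{a+ℓ}(2t)²·e^{vℓ}` converges and is at most `e^{Dv+2v}/(e^v−1)²`. -/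
theorem bessel_sum_bound (D v t : ℝ) (hv : 0 < v) (ht : 0 < t) :
    Summable (fun p : ℕ × ℤ =>
      if ((p.1 : ℝ) + (p.2 : ℝ) + 1 ≤ D) then
        (besselJ ((p.1 : ℤ) + p.2 + 1) (2 * t)) ^ 2 * Real.exp (v * ((p.2 : ℝ) + 1 / 2))
      else 0) ∧
    (∑' p : ℕ × ℤ,
      if ((p.1 : ℝ) + (p.2 : ℝ) + 1 ≤ D) then
        (besselJ ((p.1 : ℤ) + p.2 + 1) (2 * t)) ^ 2 * Real.exp (v * ((p.2 : ℝ) + 1 / 2))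
      else 0)
      ≤ Real.exp (D * v + 2 * v) / (Real.exp v - 1) ^ 2 := by
  set f : ℕ × ℤ → ℝ := fun p =>
      if ((p.1 : ℝ) + (p.2 : ℝ) + 1 ≤ D) then
        (besselJ ((p.1 : ℤ) + p.2 + 1) (2 * t)) ^ 2 * Real.exp (v * ((p.2 : ℝ) + 1 / 2))
      else 0 with hf
  set N : ℤ := ⌊D⌋ with hN
  set F : ℤ → ℝ := fun k => if ((k : ℝ) ≤ D) then Real.exp (v * k - v / 2) else 0 with hF
  set g : ℕ → ℝ := fun i => Real.exp (-v) ^ i with hg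
  -- basic facts
  have h01 : (0:ℝ) ≤ Real.exp (-v) := Real.exp_nonneg _
  have h1 : Real.exp (-v) < 1 := Real.exp_lt_one_iff.mpr (by linarith)
  have hgsum : Summable g := summable_geometric_of_lt_one h01 h1
  have hgnn : 0 ≤ g := fun i => pow_nonneg h01 i
  have hFnn : 0 ≤ F := by
    intro k; simp only [hF]; split <;> positivity
  -- injection ℕ → ℤ hitting {k ≤ N}
  have hι : Function.Injective (fun n : ℕ => N - n) := by
    intro a b hab; simp only at hab; omega
  have hF0 : ∀ k ∉ Set.range (fun n : ℕ => N - n), F k = 0 := by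
    intro k hk
    simp only [hF]
    split
    · exfalso; apply hk
      have hkN : k ≤ N := Int.le_floor.mpr (by assumption)
      exact ⟨(N - k).toNat, by simp; omega⟩
    · rfl
  have hFcomp : ∀ n : ℕ, F (N - n) = Real.exp (v * N - v / 2) * Real.exp (-v) ^ n := by
    intro n
    have hle : ((N - n : ℤ) : ℝ) ≤ D := by
      have h1' : ((N - n : ℤ) : ℝ) ≤ (N : ℝ) := by push_cast; linarith [Nat.cast_nonneg (α := ℝ) n]
      exact h1'.trans (Int.floor_le D)
    simp only [hF, hle, if_pos]
    rw [← Real.exp_nat_mul, ← Real.exp_add]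
    congr 1
    push_cast
    ring
  have hFcompSum : Summable (F ∘ fun n : ℕ => N - n) := by
    have : (F ∘ fun n : ℕ => N - n) = fun n : ℕ =>
        Real.exp (v * N - v / 2) * Real.exp (-v) ^ n := by
      funext n; exact hFcomp n
    rw [this]
    exact hgsum.mul_left _
  have hFsum : Summable F := (hι.summable_iff hF0).mp hFcompSum
  -- the dominating function
  set h : ℕ × ℤ → ℝ := fun p => g p.1 * F (p.1 + p.2 + 1) with hh
  have hbase : Summable (fun q : ℕ × ℤ => g q.1 * F q.2) :=
    hgsum.mul_of_nonneg hFsum hgnn hFnn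
  have hcomp : h = (fun q : ℕ × ℤ => g q.1 * F q.2) ∘ besselReindex := by
    funext p; rfl
  have hhsum : Summable h := by
    rw [hcomp]; exact (besselReindex.summable_iff).mpr hbase
  -- pointwise bounds
  have hfnn : ∀ p, 0 ≤ f p := by
    intro p; simp only [hf]; split <;> positivity
  have hfle : ∀ p : ℕ × ℤ, f p ≤ h p := by
    intro p
    simp only [hf, hh]
    split
    · rename_i hc
      have hcZ : (((p.1 : ℤ) + p.2 + 1 : ℤ) : ℝ) ≤ D := by push_cast; exact_mod_cast hc
      have hFval : F ((p.1 : ℤ) + p.2 + 1) = Real.exp (v * (((p.1 : ℤ) + p.2 + 1 : ℤ) : ℝ) - v / 2) := by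
        simp only [hF, hcZ, if_pos]
      rw [hFval]
      have hgv : g p.1 = Real.exp (-v * p.1) := by
        simp only [hg]; rw [← Real.exp_nat_mul]; ring_nf
      rw [hgv, ← Real.exp_add]
      have harg : -v * p.1 + (v * (((p.1 : ℤ) + p.2 + 1 : ℤ) : ℝ) - v / 2)
          = v * ((p.2 : ℝ) + 1 / 2) := by push_cast; ring
      rw [harg]
      exact mul_le_of_le_one_left (Real.exp_nonneg _) (besselJ_sq_le_one _ _)
    · exact mul_nonneg (hgnn p.1) (hFnn _)
  have hfsum : Summable f := Summable.of_nonneg_of_le hfnn hfle hhsum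
  refine ⟨hfsum, ?_⟩
  have hle1 : ∑' p, f p ≤ ∑' p, h p := Summable.tsum_le_tsum hfle hfsum hhsum
  -- compute tsum h
  have htsumh : ∑' p, h p = (1 - Real.exp (-v))⁻¹ *
      (Real.exp (v * N - v / 2) * (1 - Real.exp (-v))⁻¹) := by
    have e1 : ∑' p, h p = ∑' q : ℕ × ℤ, g q.1 * F q.2 := by
      rw [hcomp]
      exact besselReindex.tsum_eq (fun q : ℕ × ℤ => g q.1 * F q.2)
    have e2 : (∑' i, g i) * (∑' k, F k) = ∑' q : ℕ × ℤ, g q.1 * F q.2 := by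
      apply tsum_mul_tsum_of_summable_norm
      · simpa only [Real.norm_eq_abs, abs_of_nonneg (hgnn _)] using hgsum
      · simpa only [Real.norm_eq_abs, abs_of_nonneg (hFnn _)] using hFsum
    have e3 : (∑' i, g i) = (1 - Real.exp (-v))⁻¹ := tsum_geometric_of_lt_one h01 h1
    have e4 : (∑' k, F k) = Real.exp (v * N - v / 2) * (1 - Real.exp (-v))⁻¹ := by
      rw [← hι.tsum_eq (f := F) (by
        intro k hk
        by_contra hkr
        exact hk (hF0 k hkr))]
      calc ∑' n : ℕ, F (N - n) = ∑' n : ℕ, Real.exp (v * N - v / 2) * Real.exp (-v) ^ n := by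
            exact tsum_congr hFcomp
        _ = Real.exp (v * N - v / 2) * ∑' n : ℕ, Real.exp (-v) ^ n := tsum_mul_left
        _ = Real.exp (v * N - v / 2) * (1 - Real.exp (-v))⁻¹ := by
            rw [tsum_geometric_of_lt_one h01 h1]
    rw [e1, ← e2, e3, e4]
  -- final arithmetic
  have hEpos : (0:ℝ) < Real.exp v := Real.exp_pos v
  have hE1 : 1 < Real.exp v := by nlinarith [Real.add_one_le_exp v]
  have hden : (1 - Real.exp (-v)) = (Real.exp v - 1) / Real.exp v := by
    rw [Real.exp_neg]; field_simp
  have hNle : (N : ℝ) ≤ D := Int.floor_le D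
  calc ∑' p, f p ≤ ∑' p, h p := hle1
    _ = Real.exp (v * N - v / 2) * Real.exp v * Real.exp v / (Real.exp v - 1) ^ 2 := by
        rw [htsumh, hden]
        field_simp
    _ = Real.exp (v * N - v / 2 + v + v) / (Real.exp v - 1) ^ 2 := by
        rw [← Real.exp_add, ← Real.exp_add]
    _ ≤ Real.exp (D * v + 2 * v) / (Real.exp v - 1) ^ 2 := by
        apply div_le_div_of_nonneg_right ?_ (by nlinarith) |>.trans_eq rfl
        · exact Real.exp_le_exp.mpr (by nlinarith)
end

section
/- For every φ ∈ 𝒴₁ and every x ∈ ℝ one has max(−x, 0)²/2 ≤ ∫₀^∞ max(φ(y) − y − x, 0) dy ≤ max(−x, 0)²/2 + 1. -/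
open MeasureTheory

/-- The set `𝒴₁`: weakly decreasing functions `φ : [0,∞) → [0,∞)` with unit integral. -/
def MemYone (φ : ℝ → ℝ) : Prop :=
  (∀ x, 0 ≤ x → 0 ≤ φ x) ∧ AntitoneOn φ (Set.Ici 0) ∧
    (∫ x in Set.Ioi (0 : ℝ), φ x) = 1

/-- For every `φ ∈ 𝒴₁` and every `x ∈ ℝ`,
`max(−x,0)²/2 ≤ ∫₀^∞ max(φ(y) − y − x, 0) dy ≤ max(−x,0)²/2 + 1`. -/
theorem vq_bounds (φ : ℝ → ℝ) (hφ : MemYone φ) (x : ℝ) :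
    (max (-x) 0) ^ 2 / 2 ≤ (∫ y in Set.Ioi (0 : ℝ), max (φ y - y - x) 0) ∧
    (∫ y in Set.Ioi (0 : ℝ), max (φ y - y - x) 0) ≤ (max (-x) 0) ^ 2 / 2 + 1 := by
  obtain ⟨hpos, hanti, hint⟩ := hφ
  set c : ℝ := max (-x) 0 with hc
  have hc0 : 0 ≤ c := le_max_right _ _
  -- φ is integrable on Ioi 0
  have hφint : IntegrableOn φ (Set.Ioi (0:ℝ)) := by
    by_contra h
    rw [integral_undef h] at hint
    norm_num at hint
  -- g y = max (-x - y) 0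
  set g : ℝ → ℝ := fun y => max (-x - y) 0 with hgdef
  have hgcont : Continuous g := by
    apply Continuous.max
    · exact (continuous_const.sub continuous_id)
    · exact continuous_const
  have hgIoc : ∀ y ∈ Set.Ioc (0:ℝ) c, g y = c - y := by
    intro y hy
    have hyc : y ≤ c := hy.2
    have hy0 : 0 < y := hy.1
    have hcx : c = -x := by
      rcases max_cases (-x) (0:ℝ) with ⟨h1, _⟩ | ⟨h1, h2⟩
      · exact h1
      · exfalso; rw [hc, h1] at hyc; linarith
    simp only [hgdef, hcx]
    rw [max_eq_left]
    linarith [hcx ▸ hyc]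
  have hgIoi : ∀ y ∈ Set.Ioi c, g y = 0 := by
    intro y hy
    have : -x ≤ c := le_max_left _ _
    simp only [hgdef]
    rw [max_eq_right]
    simp only [Set.mem_Ioi] at hy
    linarith
  have hunion : Set.Ioc (0:ℝ) c ∪ Set.Ioi c = Set.Ioi 0 := Set.Ioc_union_Ioi_eq_Ioi hc0
  have hgint1 : IntegrableOn g (Set.Ioc (0:ℝ) c) := hgcont.integrableOn_Ioc
  have hgint2 : IntegrableOn g (Set.Ioi c) := by
    apply (integrableOn_congr_fun (g := fun _ => (0:ℝ)) _ measurableSet_Ioi).mpr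
    · exact (integrableOn_const_iff (C := (0:ℝ))).mpr (Or.inl (by norm_num))
    · intro y hy; exact hgIoi y hy
  have hgint : IntegrableOn g (Set.Ioi (0:ℝ)) := by
    rw [← hunion]
    exact hgint1.union hgint2
  -- value of ∫ g
  have hgval : (∫ y in Set.Ioi (0:ℝ), g y) = c ^ 2 / 2 := by
    rw [← hunion, setIntegral_union (Set.Ioc_disjoint_Ioi le_rfl) measurableSet_Ioi hgint1 hgint2]
    have h2 : (∫ y in Set.Ioi c, g y) = 0 := by
      rw [setIntegral_congr_fun measurableSet_Ioi hgIoi]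
      simp
    have h1 : (∫ y in Set.Ioc (0:ℝ) c, g y) = c ^ 2 / 2 := by
      rw [setIntegral_congr_fun measurableSet_Ioc hgIoc,
        ← intervalIntegral.integral_of_le hc0]
      rw [intervalIntegral.integral_sub intervalIntegrable_const intervalIntegral.intervalIntegrable_id]
      simp [integral_id]
      ring
    rw [h1, h2, add_zero]
  -- the integrand f
  set f : ℝ → ℝ := fun y => max (φ y - y - x) 0 with hfdef
  have hfmeas : AEStronglyMeasurable f (volume.restrict (Set.Ioi (0:ℝ))) := by
    exact ((hφint.aestronglyMeasurable.sub aestronglyMeasurable_id).sub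
      aestronglyMeasurable_const).sup aestronglyMeasurable_const
  have hbound : ∀ y ∈ Set.Ioi (0:ℝ), f y ≤ g y + φ y := by
    intro y hy
    have hφy : 0 ≤ φ y := hpos y (le_of_lt hy)
    simp only [hfdef, hgdef]
    rcases max_cases (φ y - y - x) (0:ℝ) with ⟨h1, _⟩ | ⟨h1, _⟩ <;>
      rw [h1] <;> [skip; skip] <;>
      nlinarith [le_max_left (-x - y) (0:ℝ), le_max_right (-x - y) (0:ℝ)]
  have hlow : ∀ y ∈ Set.Ioi (0:ℝ), g y ≤ f y := by
    intro y hy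
    have hφy : 0 ≤ φ y := hpos y (le_of_lt hy)
    exact max_le_max (by linarith) le_rfl
  have hfint : IntegrableOn f (Set.Ioi (0:ℝ)) := by
    apply Integrable.mono' (hgint.add hφint) hfmeas
    filter_upwards [ae_restrict_mem measurableSet_Ioi] with y hy
    have h0 : 0 ≤ f y := le_max_right _ _
    rw [Real.norm_eq_abs, abs_of_nonneg h0]
    exact hbound y hy
  constructor
  · calc c ^ 2 / 2 = ∫ y in Set.Ioi (0:ℝ), g y := hgval.symm
      _ ≤ ∫ y in Set.Ioi (0:ℝ), f y :=
        setIntegral_mono_on hgint hfint measurableSet_Ioi hlow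
  · calc (∫ y in Set.Ioi (0:ℝ), f y)
        ≤ ∫ y in Set.Ioi (0:ℝ), (g y + φ y) :=
          setIntegral_mono_on hfint (hgint.add hφint) measurableSet_Ioi hbound
      _ = (∫ y in Set.Ioi (0:ℝ), g y) + ∫ y in Set.Ioi (0:ℝ), φ y := integral_add hgint hφint
      _ = c ^ 2 / 2 + 1 := by rw [hgval, hint]
end

section
/- Fix y ∈ ℝ and φ ∈ 𝒴₁. Let (y_n) be a real sequence with y_n → y, and let (φ_n) be a sequence in 𝒴₁ with ‖φ_n − φ‖_{L¹([0,∞))} → 0. Then ∫₀^∞ max(φ_n(z) − z − y_n, 0) dz → ∫₀^∞ max(φ(z) − z − y, 0) dz as n → ∞. -/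
open MeasureTheory Filter Topology

lemma memYone_integrable {φ : ℝ → ℝ} (hφ : MemYone φ) :
    IntegrableOn φ (Set.Ioi 0) := by
  by_contra h
  have h2 := hφ.2.2
  rw [integral_undef h] at h2
  norm_num at h2

lemma memYone_le_inv {φ : ℝ → ℝ} (hφ : MemYone φ) {z : ℝ} (hz : 0 < z) :
    φ z ≤ 1 / z := by
  have hint : IntegrableOn φ (Set.Ioc 0 z) :=
    (memYone_integrable hφ).mono_set Set.Ioc_subset_Ioi_self
  have h1 : z * φ z ≤ ∫ x in Set.Ioc 0 z, φ x := by
    have hc : (∫ _ in Set.Ioc (0:ℝ) z, φ z) = z * φ z := by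
      rw [setIntegral_const, Measure.real, Real.volume_Ioc, ENNReal.toReal_ofReal (by linarith), sub_zero,
        smul_eq_mul]
    rw [← hc]
    refine setIntegral_mono_on (integrableOn_const (ne_of_lt ?_)) hint measurableSet_Ioc
      (fun x hx => hφ.2.1 (Set.mem_Ici.2 hx.1.le) (Set.mem_Ici.2 hz.le) hx.2)
    rw [Real.volume_Ioc]
    exact ENNReal.ofReal_lt_top
  have h2 : (∫ x in Set.Ioc 0 z, φ x) ≤ ∫ x in Set.Ioi (0:ℝ), φ x := by
    refine setIntegral_mono_set (memYone_integrable hφ) ?_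
      (HasSubset.Subset.eventuallyLE Set.Ioc_subset_Ioi_self)
    filter_upwards [ae_restrict_mem measurableSet_Ioi] with x hx
    exact hφ.1 x (le_of_lt hx)
  rw [hφ.2.2] at h2
  rw [le_div_iff₀ hz, mul_comm]
  linarith

lemma split_integral (f : ℝ → ℝ) (R : ℝ) (hR : 0 < R) (hf : ∀ z, R < z → f z = 0)
    (hint : IntegrableOn f (Set.Ioc 0 R)) :
    ∫ z in Set.Ioi (0:ℝ), f z = ∫ z in Set.Ioc 0 R, f z := by
  have hs : Set.Ioi (0:ℝ) = Set.Ioc 0 R ∪ Set.Ioi R := (Set.Ioc_union_Ioi_eq_Ioi hR.le).symm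
  have hint2 : IntegrableOn f (Set.Ioi R) := by
    refine (integrableOn_zero).congr_fun (fun z hz => (hf z hz).symm)
      measurableSet_Ioi
  rw [hs, setIntegral_union (Set.Ioc_disjoint_Ioi le_rfl) measurableSet_Ioi hint hint2]
  have : (∫ z in Set.Ioi R, f z) = 0 := by
    apply setIntegral_eq_zero_of_forall_eq_zero
    exact fun z hz => hf z hz
  rw [this, add_zero]

/-- If `y_n → y` and `φ_n → φ` in `L¹([0,∞))` with `φ, φ_n ∈ 𝒴₁`, then
`∫₀^∞ [φ_n(z) − z − y_n]_+ dz → ∫₀^∞ [φ(z) − z − y]_+ dz`. -/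
theorem vq_continuity (φ : ℝ → ℝ) (hφ : MemYone φ) (y : ℝ)
    (yn : ℕ → ℝ) (hy : Tendsto yn atTop (nhds y))
    (φn : ℕ → ℝ → ℝ) (hφn : ∀ n, MemYone (φn n))
    (hL1 : Tendsto (fun n => ∫ z in Set.Ioi (0 : ℝ), |φn n z - φ z|) atTop (nhds 0)) :
    Tendsto (fun n => ∫ z in Set.Ioi (0 : ℝ), max (φn n z - z - yn n) 0) atTop
      (nhds (∫ z in Set.Ioi (0 : ℝ), max (φ z - z - y) 0)) := by
  obtain ⟨m, hm⟩ := hy.bddBelow_range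
  set m' : ℝ := min y m with hm'
  set R : ℝ := max 1 (1 - m') with hRdef
  have hR1 : (1:ℝ) ≤ R := le_max_left _ _
  have hR0 : (0:ℝ) < R := by linarith
  have hRm : 1 ≤ R + m' := by
    have : 1 - m' ≤ R := le_max_right _ _
    linarith
  -- vanishing lemma
  have key : ∀ (ψ : ℝ → ℝ), MemYone ψ → ∀ c : ℝ, m' ≤ c → ∀ z, R < z →
      max (ψ z - z - c) 0 = 0 := by
    intro ψ hψ c hc z hz
    have hz0 : 0 < z := lt_trans hR0 hz
    have h1 : ψ z ≤ 1 / z := memYone_le_inv hψ hz0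
    have h2 : 1 / z ≤ 1 := by
      rw [div_le_one hz0]; linarith
    have : ψ z - z - c ≤ 0 := by
      have : z + c ≥ R + m' := by linarith
      linarith
    exact max_eq_right this
  have hccy : m' ≤ y := min_le_left _ _
  have hccyn : ∀ n, m' ≤ yn n := fun n =>
    le_trans (min_le_right _ _) (hm (Set.mem_range_self n))
  -- integrability of the integrands on Ioc 0 R
  have hlin : IntegrableOn (fun z : ℝ => z) (Set.Ioc 0 R) := by
    apply Continuous.integrableOn_Ioc continuous_id
  have hFint : ∀ (ψ : ℝ → ℝ), IntegrableOn ψ (Set.Ioi 0) → ∀ c : ℝ,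
      IntegrableOn (fun z => max (ψ z - z - c) 0) (Set.Ioc 0 R) := by
    intro ψ hψ c
    exact (((hψ.mono_set Set.Ioc_subset_Ioi_self).sub hlin).sub
      (integrableOn_const (ne_of_lt (by rw [Real.volume_Ioc]; exact ENNReal.ofReal_lt_top)))).pos_part
  have hφint := memYone_integrable hφ
  have hφnint := fun n => memYone_integrable (hφn n)
  have hF : ∀ n, (∫ z in Set.Ioi (0:ℝ), max (φn n z - z - yn n) 0)
      = ∫ z in Set.Ioc (0:ℝ) R, max (φn n z - z - yn n) 0 :=
    fun n => split_integral _ R hR0 (key _ (hφn n) _ (hccyn n)) (hFint _ (hφnint n) _)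
  have hFlim : (∫ z in Set.Ioi (0:ℝ), max (φ z - z - y) 0)
      = ∫ z in Set.Ioc (0:ℝ) R, max (φ z - z - y) 0 :=
    split_integral _ R hR0 (key _ hφ _ hccy) (hFint _ hφint _)
  -- the squeeze
  rw [← tendsto_sub_nhds_zero_iff]
  apply squeeze_zero_norm (a := fun n =>
    (∫ z in Set.Ioi (0:ℝ), |φn n z - φ z|) + R * |yn n - y|)
  · intro n
    rw [hF, hFlim]
    have hFn := hFint _ (hφnint n) (yn n)
    have hFi := hFint _ hφint y
    rw [← integral_sub hFn hFi]
    refine le_trans (norm_integral_le_integral_norm _) ?_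
    simp only [Real.norm_eq_abs]
    have habs : IntegrableOn (fun z => |φn n z - φ z|) (Set.Ioc 0 R) :=
      (((hφnint n).mono_set Set.Ioc_subset_Ioi_self).sub
        (hφint.mono_set Set.Ioc_subset_Ioi_self)).abs
    have step1 : (∫ z in Set.Ioc (0:ℝ) R,
        |max (φn n z - z - yn n) 0 - max (φ z - z - y) 0|)
        ≤ ∫ z in Set.Ioc (0:ℝ) R, (|φn n z - φ z| + |yn n - y|) := by
      refine setIntegral_mono_on (hFn.sub hFi).abs
        (habs.add (integrableOn_const (ne_of_lt (by rw [Real.volume_Ioc]; exact ENNReal.ofReal_lt_top))))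
        measurableSet_Ioc (fun z _ => ?_)
      calc |max (φn n z - z - yn n) 0 - max (φ z - z - y) 0|
          ≤ |(φn n z - z - yn n) - (φ z - z - y)| := abs_max_sub_max_le_abs _ _ _
        _ = |(φn n z - φ z) - (yn n - y)| := by ring_nf
        _ ≤ |φn n z - φ z| + |yn n - y| := abs_sub _ _
    refine le_trans step1 ?_
    rw [integral_add habs (integrableOn_const (ne_of_lt (by rw [Real.volume_Ioc]; exact ENNReal.ofReal_lt_top)))]
    gcongr ?_ + ?_
    · refine setIntegral_mono_set (((hφnint n).sub hφint).abs) ?_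
        (HasSubset.Subset.eventuallyLE Set.Ioc_subset_Ioi_self)
      filter_upwards with x using abs_nonneg _
    · rw [setIntegral_const, Measure.real, Real.volume_Ioc, ENNReal.toReal_ofReal (by linarith), sub_zero,
        smul_eq_mul]
  · have hy0 : Tendsto (fun n => |yn n - y|) atTop (nhds 0) := by
      have h := (hy.sub (tendsto_const_nhds (x := y) (f := atTop))).abs
      simpa using h
    have := hL1.add ((tendsto_const_nhds (x := R)).mul hy0)
    simpa using this
end

section
/- Let G : ℝ → [0, 1] be a decreasing function such that lim_{x→∞} x^{-2}·log G(−x) = 0 and lim_{x→∞} x^{-2}·log G(x) = −∞. Let O ⊆ ℝ be an open set and 𝔤 : O → ℝ a continuous function. Let (X_t)_{t ≥ 1} be a family of real-valued random variables (each defined on some probability space) such that lim_{t→∞} t^{-2}·log E[G(X_t − x·t)] = 𝔤(x) for every x ∈ O. Then for every x ∈ O one has lim_{t→∞} t^{-2}·log P(X_t ≤ x·t) = 𝔤(x). -/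
open MeasureTheory Filter Topology

set_option maxHeartbeats 1600000

/-- De-shifting lemma: if `G : ℝ → [0,1]` is decreasing with
`x⁻²·log G(−x) → 0` and `x⁻²·log G(x) → −∞`, `O` is open, `𝔤 : O → ℝ` is continuous, and
real random variables `X_t` satisfy `t⁻²·log E[G(X_t − x·t)] → 𝔤(x)` for all `x ∈ O`,
then `t⁻²·log P(X_t ≤ x·t) → 𝔤(x)` for all `x ∈ O`. -/
theorem deshifting_lemma (G : ℝ → ℝ) (hGanti : Antitone G)
    (hGrange : ∀ y, G y ∈ Set.Icc (0 : ℝ) 1)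
    (hGleft : Tendsto (fun x : ℝ => (1 / x ^ 2) * Real.log (G (-x))) atTop (nhds 0))
    (hGright : Tendsto (fun x : ℝ => (1 / x ^ 2) * Real.log (G x)) atTop atBot)
    (O : Set ℝ) (hO : IsOpen O) (g : ℝ → ℝ) (hg : ContinuousOn g O)
    (Ω : ℝ → Type*) (mΩ : ∀ t, MeasurableSpace (Ω t))
    (μ : ∀ t, Measure (Ω t)) (hprob : ∀ t, IsProbabilityMeasure (μ t))
    (X : ∀ t, Ω t → ℝ) (hX : ∀ t, Measurable (X t))
    (hlim : ∀ x ∈ O,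
      Tendsto (fun t : ℝ => (1 / t ^ 2) * Real.log (∫ ω, G (X t ω - x * t) ∂μ t))
        atTop (nhds (g x))) :
    ∀ x ∈ O,
      Tendsto (fun t : ℝ => (1 / t ^ 2) * Real.log ((μ t {ω | X t ω ≤ x * t}).toReal))
        atTop (nhds (g x)) := by
  intro x hx
  have hG0 : ∀ y, 0 ≤ G y := fun y => (hGrange y).1
  have hG1 : ∀ y, G y ≤ 1 := fun y => (hGrange y).2
  have hGpos : ∀ y, 0 < G y := by
    intro y
    rcases (hG0 y).lt_or_eq with h | h
    · exact h
    · exfalso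
      have heq : ∀ᶠ z in atTop, (1 / z ^ 2) * Real.log (G z) = 0 := by
        filter_upwards [eventually_ge_atTop y] with z hz
        have hz0 : G z = 0 := le_antisymm ((hGanti hz).trans h.symm.le) (hG0 z)
        simp [hz0]
      have hlt : ∀ᶠ z in atTop, (1 / z ^ 2) * Real.log (G z) ≤ -1 :=
        hGright.eventually (eventually_le_atBot (-1))
      obtain ⟨z, h1, h2⟩ := (heq.and hlt).exists
      rw [h1] at h2; linarith
  have hmeas : ∀ (t : ℝ) (a : ℝ), Measurable fun ω => G (X t ω - a) :=
    fun t a => hGanti.measurable.comp ((hX t).sub_const a)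
  have hInt : ∀ (t : ℝ) (a : ℝ), Integrable (fun ω => G (X t ω - a)) (μ t) := by
    intro t a
    haveI := hprob t
    refine (integrable_const (1 : ℝ)).mono' (hmeas t a).aestronglyMeasurable ?_
    filter_upwards with ω
    rw [Real.norm_eq_abs, abs_of_nonneg (hG0 _)]
    exact hG1 _
  have hEpos : ∀ (t : ℝ) (a : ℝ), 0 < ∫ ω, G (X t ω - a) ∂ μ t := by
    intro t a
    haveI := hprob t
    rw [integral_pos_iff_support_of_nonneg (fun ω => hG0 _) (hInt t a)]
    have hsupp : (Function.support fun ω => G (X t ω - a)) = Set.univ := by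
      ext ω; simp [Function.support, (hGpos _).ne']
    rw [hsupp]
    simp
  rw [Metric.tendsto_nhds]
  intro ε hε
  have hcont : ContinuousAt g x := (hg x hx).continuousAt (hO.mem_nhds hx)
  obtain ⟨δ, hδ, hδg⟩ := Metric.continuousAt_iff.1 hcont (ε/4) (by linarith)
  obtain ⟨r, hr, hrO⟩ := Metric.isOpen_iff.1 hO x hx
  set c := min δ r / 2 with hc
  have hcpos : 0 < c := by rw [hc]; exact div_pos (lt_min hδ hr) two_pos
  have hcδ : c < δ := by
    have := min_le_left δ r; rw [hc]; linarith
  have hcr : c < r := by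
    have := min_le_right δ r; rw [hc]; linarith
  have hdistp : dist (x - c) x = c := by
    rw [Real.dist_eq, show x - c - x = -c by ring, abs_neg, abs_of_pos hcpos]
  have hdistq : dist (x + c) x = c := by
    rw [Real.dist_eq, show x + c - x = c by ring, abs_of_pos hcpos]
  have hpO : x - c ∈ O := hrO (by rw [Metric.mem_ball, hdistp]; exact hcr)
  have hqO : x + c ∈ O := hrO (by rw [Metric.mem_ball, hdistq]; exact hcr)
  have hgp : |g (x - c) - g x| < ε/4 := by
    have := hδg (show dist (x - c) x < δ by rw [hdistp]; exact hcδ)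
    rwa [Real.dist_eq] at this
  have hgq : |g (x + c) - g x| < ε/4 := by
    have := hδg (show dist (x + c) x < δ by rw [hdistq]; exact hcδ)
    rwa [Real.dist_eq] at this
  have hscale : Tendsto (fun t : ℝ => c * t) atTop atTop :=
    Tendsto.const_mul_atTop hcpos tendsto_id
  have hL3 : Tendsto (fun t : ℝ => (1 / t ^ 2) * Real.log (G (c * t))) atTop atBot := by
    have h1 : Tendsto (fun t : ℝ => (1 / (c*t) ^ 2) * Real.log (G (c * t))) atTop atBot :=
      hGright.comp hscale
    have h2 : Tendsto (fun t : ℝ => c^2 * ((1 / (c*t) ^ 2) * Real.log (G (c * t)))) atTop atBot :=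
      h1.const_mul_atBot (by positivity)
    apply Tendsto.congr' _ h2
    filter_upwards [eventually_gt_atTop 0] with t ht
    have ht' : t ≠ 0 := ht.ne'
    field_simp
  have hL4 : Tendsto (fun t : ℝ => (1 / t ^ 2) * Real.log (G (-(c * t)))) atTop (nhds 0) := by
    have h1 : Tendsto (fun t : ℝ => (1 / (c*t) ^ 2) * Real.log (G (-(c * t)))) atTop (nhds 0) :=
      hGleft.comp hscale
    have h2 : Tendsto (fun t : ℝ => c^2 * ((1 / (c*t) ^ 2) * Real.log (G (-(c * t))))) atTop
        (nhds 0) := by simpa using h1.const_mul (c^2)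
    apply Tendsto.congr' _ h2
    filter_upwards [eventually_gt_atTop 0] with t ht
    have ht' : t ≠ 0 := ht.ne'
    field_simp
  have hL5 : Tendsto (fun t : ℝ => (1 / t ^ 2) * Real.log 2) atTop (nhds 0) := by
    have h1 : Tendsto (fun t : ℝ => (t ^ 2)⁻¹) atTop (nhds 0) :=
      (tendsto_pow_atTop (n := 2) (by norm_num)).inv_tendsto_atTop
    have h2 := h1.mul_const (Real.log 2)
    rw [zero_mul] at h2
    simpa [one_div] using h2
  have hB : ∀ᶠ t : ℝ in atTop,
      g (x - c) - ε/4 < (1 / t ^ 2) * Real.log (∫ ω, G (X t ω - (x - c) * t) ∂ μ t) :=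
    (hlim (x - c) hpO).eventually (eventually_gt_nhds (by linarith))
  have hD : ∀ᶠ t : ℝ in atTop,
      (1 / t ^ 2) * Real.log (∫ ω, G (X t ω - (x + c) * t) ∂ μ t) < g (x + c) + ε/4 :=
    (hlim (x + c) hqO).eventually (eventually_lt_nhds (by linarith))
  have hC : ∀ᶠ t : ℝ in atTop,
      (1 / t ^ 2) * Real.log (G (c * t)) < g (x - c) - ε/4 - 1 :=
    hL3.eventually (eventually_lt_atBot _)
  have hE : ∀ᶠ t : ℝ in atTop, -(ε/4) < (1 / t ^ 2) * Real.log (G (-(c * t))) :=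
    hL4.eventually (eventually_gt_nhds (by linarith))
  have hF : ∀ᶠ t : ℝ in atTop, (1 / t ^ 2) * Real.log 2 < min (ε/4) 1 :=
    hL5.eventually (eventually_lt_nhds (lt_min (by linarith) one_pos))
  filter_upwards [eventually_ge_atTop (1 : ℝ), hB, hC, hD, hE, hF]
    with t ht1 htB htC htD htE htF
  haveI := hprob t
  have ht0 : (0 : ℝ) < t := lt_of_lt_of_le one_pos ht1
  have ht2 : (0 : ℝ) < t ^ 2 := by positivity
  have hu : (0 : ℝ) < 1 / t ^ 2 := by positivity
  set s := {ω | X t ω ≤ x * t} with hs_def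
  have hs : MeasurableSet s := measurableSet_le (hX t) measurable_const
  set EP := ∫ ω, G (X t ω - (x - c) * t) ∂ μ t with hEP
  set EQ := ∫ ω, G (X t ω - (x + c) * t) ∂ μ t with hEQ
  have hEPpos : 0 < EP := hEpos t _
  have hEQpos : 0 < EQ := hEpos t _
  -- Integral inequality 1 (upper): G(-(c t)) * P ≤ EQ
  have hIneq1 : G (-(c*t)) * (μ t s).toReal ≤ EQ := by
    have hpt : ∀ ω, s.indicator (fun _ => G (-(c*t))) ω ≤ G (X t ω - (x + c) * t) := by
      intro ω
      by_cases hω : ω ∈ s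
      · rw [Set.indicator_of_mem hω]
        apply hGanti
        have hXω : X t ω ≤ x * t := hω
        have hexp : (x + c) * t = x * t + c * t := by ring
        linarith
      · rw [Set.indicator_of_notMem hω]
        exact hG0 _
    calc G (-(c*t)) * (μ t s).toReal
        = ∫ ω, s.indicator (fun _ => G (-(c*t))) ω ∂ μ t := by
          rw [integral_indicator_const _ hs, smul_eq_mul, Measure.real]; ring
      _ ≤ EQ := integral_mono ((integrable_const _).indicator hs) (hInt t _) hpt
  -- Integral inequality 2 (lower): EP ≤ P + G(c t)
  have hIneq2 : EP ≤ (μ t s).toReal + G (c*t) := by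
    have hpt : ∀ ω, G (X t ω - (x - c) * t) ≤ s.indicator (fun _ => (1:ℝ)) ω + G (c*t) := by
      intro ω
      by_cases hω : ω ∈ s
      · rw [Set.indicator_of_mem hω]
        have h1 := hG1 (X t ω - (x - c) * t)
        have h2 := hG0 (c*t)
        linarith
      · rw [Set.indicator_of_notMem hω]
        have hXω : ¬ X t ω ≤ x * t := hω
        push_neg at hXω
        have hexp : (x - c) * t = x * t - c * t := by ring
        have hle : c * t ≤ X t ω - (x - c) * t := by linarith
        have := hGanti hle
        linarith
    calc EP ≤ ∫ ω, (s.indicator (fun _ => (1:ℝ)) ω + G (c*t)) ∂ μ t :=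
          integral_mono (hInt t _)
            (((integrable_const _).indicator hs).add (integrable_const _)) hpt
      _ = (μ t s).toReal + G (c*t) := by
          rw [integral_add ((integrable_const _).indicator hs) (integrable_const _),
            integral_indicator_const _ hs, integral_const]
          simp [Measure.real]
  -- convert eventual bounds to log bounds
  have hlogEP : (g (x - c) - ε/4) * t ^ 2 < Real.log EP := by
    rw [show (1 / t ^ 2) * Real.log EP = Real.log EP / t ^ 2 by ring] at htB
    exact (lt_div_iff₀ ht2).1 htB
  have hlogC : Real.log (G (c * t)) < (g (x - c) - ε/4 - 1) * t ^ 2 := by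
    rw [show (1 / t ^ 2) * Real.log (G (c * t)) = Real.log (G (c * t)) / t ^ 2 by ring] at htC
    exact (div_lt_iff₀ ht2).1 htC
  have hlog2 : Real.log 2 < t ^ 2 := by
    rw [show (1 / t ^ 2) * Real.log 2 = Real.log 2 / t ^ 2 by ring] at htF
    have h1 := (div_lt_iff₀ ht2).1 htF
    have h2 : min (ε/4) 1 ≤ 1 := min_le_right _ _
    nlinarith
  have h2G : 2 * G (c*t) < EP := by
    have hlogsum : Real.log (2 * G (c*t)) < Real.log EP := by
      rw [Real.log_mul two_ne_zero (hGpos _).ne']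
      linarith
    have hpos : (0:ℝ) < 2 * G (c*t) := by have := hGpos (c*t); linarith
    exact (Real.log_lt_log_iff hpos hEPpos).1 hlogsum
  have hPpos : 0 < (μ t s).toReal := by
    have := hGpos (c*t); linarith
  have hPge : EP / 2 ≤ (μ t s).toReal := by linarith
  -- lower bound on (1/t^2) log P
  have hlogPlow : Real.log EP - Real.log 2 ≤ Real.log ((μ t s).toReal) := by
    have h1 : Real.log (EP / 2) ≤ Real.log ((μ t s).toReal) :=
      Real.log_le_log (by positivity) hPge
    rwa [Real.log_div hEPpos.ne' two_ne_zero] at h1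
  have hlow : g x - ε < (1 / t ^ 2) * Real.log ((μ t s).toReal) := by
    have h1 : (1 / t ^ 2) * (Real.log EP - Real.log 2) ≤
        (1 / t ^ 2) * Real.log ((μ t s).toReal) :=
      mul_le_mul_of_nonneg_left hlogPlow hu.le
    rw [mul_sub] at h1
    have h2 : (1 / t ^ 2) * Real.log 2 < ε/4 :=
      lt_of_lt_of_le htF (min_le_left _ _)
    have h3 := abs_lt.1 hgp
    linarith
  -- upper bound on (1/t^2) log P
  have hPub : (μ t s).toReal ≤ EQ / G (-(c*t)) := by
    rw [le_div_iff₀ (hGpos _)]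
    nlinarith
  have hlogPub : Real.log ((μ t s).toReal) ≤ Real.log EQ - Real.log (G (-(c*t))) := by
    have h1 : Real.log ((μ t s).toReal) ≤ Real.log (EQ / G (-(c*t))) :=
      Real.log_le_log hPpos hPub
    rwa [Real.log_div hEQpos.ne' (hGpos _).ne'] at h1
  have hhigh : (1 / t ^ 2) * Real.log ((μ t s).toReal) < g x + ε := by
    have h1 : (1 / t ^ 2) * Real.log ((μ t s).toReal) ≤
        (1 / t ^ 2) * (Real.log EQ - Real.log (G (-(c*t)))) :=
      mul_le_mul_of_nonneg_left hlogPub hu.le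
    rw [mul_sub] at h1
    have h3 := abs_lt.1 hgq
    linarith
  rw [Real.dist_eq, abs_lt]
  constructor <;> linarith
end

section
/- Fix q ∈ (0,1), γ > 0 and θ ∈ (0, log(1/q)). Let (A_k)_{k ≥ 1} be independent ℕ-valued random variables with A_k Poisson-distributed with mean q^k·γ². Then the random series S := Σ_{k ≥ 1} k·A_k is almost surely finite and E[e^{θ·S}] = exp( γ²·( q·e^θ/(1 − q·e^θ) − q/(1 − q) ) ). -/
open MeasureTheory ProbabilityTheory Filter
open scoped ENNReal

lemma aux_hasSum_exp (x : ℝ) : HasSum (fun n : ℕ => x ^ n / n.factorial) (Real.exp x) := by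
  rw [Real.exp_eq_exp_ℝ]
  exact NormedSpace.expSeries_div_hasSum_exp x

lemma aux_poisson_mgf (m s : ℝ) :
    HasSum (fun j : ℕ => Real.exp (s * j) * (Real.exp (-m) * m ^ j / j.factorial))
      (Real.exp (m * (Real.exp s - 1))) := by
  have h := (aux_hasSum_exp (m * Real.exp s)).mul_left (Real.exp (-m))
  have he : Real.exp (-m) * Real.exp (m * Real.exp s) = Real.exp (m * (Real.exp s - 1)) := by
    rw [← Real.exp_add]; ring_nf
  rw [he] at h
  convert h using 2 with j
  · rfl
  rw [mul_pow, mul_comm s (j : ℝ), Real.exp_nat_mul]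
  ring

lemma aux_poisson_mean (m : ℝ) :
    HasSum (fun j : ℕ => (j : ℝ) * (Real.exp (-m) * m ^ j / j.factorial)) m := by
  set f : ℕ → ℝ := fun j => (j : ℝ) * (Real.exp (-m) * m ^ j / j.factorial) with hf
  have h1 : HasSum (fun j : ℕ => f (j + 1)) (Real.exp (-m) * m * Real.exp m) := by
    have h := ((aux_hasSum_exp m).mul_left (Real.exp (-m) * m))
    convert h using 2 with j
    · rfl
    simp only [hf, Nat.factorial_succ, Nat.cast_mul, Nat.cast_add, Nat.cast_one, pow_succ]
    have hj : ((j : ℝ) + 1) ≠ 0 := by positivity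
    have hfac : (j.factorial : ℝ) ≠ 0 := Nat.cast_ne_zero.mpr j.factorial_ne_zero
    field_simp
  have h2 := (hasSum_nat_add_iff 1).mp h1
  simp only [Finset.range_one, Finset.sum_singleton, hf, Nat.cast_zero, zero_mul, add_zero] at h2
  have h3 : Real.exp (-m) * m * Real.exp m = m := by
    rw [mul_comm (Real.exp (-m)) m, mul_assoc, ← Real.exp_add]; simp
  rwa [h3] at h2

lemma aux_lintegral_comp_nat {Ω : Type*} [MeasurableSpace Ω] (μ : Measure Ω)
    (B : Ω → ℕ) (hB : Measurable B) (g : ℕ → ℝ≥0∞) :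
    ∫⁻ ω, g (B ω) ∂μ = ∑' j, g j * μ {ω | B ω = j} := by
  rw [← lintegral_map measurable_from_nat hB, lintegral_countable']
  congr 1
  ext j
  rw [Measure.map_apply hB (measurableSet_singleton j)]
  rfl

lemma aux_tsum_ofReal {f : ℕ → ℝ} {a : ℝ} (h : HasSum f a) (hnn : ∀ j, 0 ≤ f j) :
    ∑' j, ENNReal.ofReal (f j) = ENNReal.ofReal a := by
  rw [← ENNReal.ofReal_tsum_of_nonneg hnn h.summable, h.tsum_eq]

lemma aux_iSup_eq {f : ℕ → ℝ≥0∞} {a : ℝ≥0∞} (hm : Monotone f)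
    (h : Tendsto f atTop (nhds a)) : ⨆ n, f n = a :=
  tendsto_nhds_unique (tendsto_atTop_iSup hm) h

lemma aux_geom {r : ℝ} (h0 : 0 ≤ r) (h1 : r < 1) :
    HasSum (fun k : ℕ => r ^ (k + 1)) (r / (1 - r)) := by
  have h := (hasSum_geometric_of_lt_one h0 h1).mul_left r
  have he : (fun k : ℕ => r ^ (k + 1)) = fun k : ℕ => r * r ^ k := by
    funext k; rw [pow_succ]; ring
  rw [he, div_eq_mul_inv]
  exact h

/-- If `(A_k)_{k ≥ 1}` are independent Poisson random variables with `A_k` of mean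
`q^k·γ²` (here encoded as `A : ℕ → Ω → ℕ` with index `k` standing for `k+1`), and
`0 < θ < log(1/q)`, then `S = Σ_{k ≥ 1} k·A_k` is almost surely finite and
`E[e^{θS}] = exp( γ²·( q·e^θ/(1 − q·e^θ) − q/(1 − q) ) )`. -/
theorem poisson_series_mgf (q γ θ : ℝ) (hq : q ∈ Set.Ioo (0 : ℝ) 1) (hγ : 0 < γ)
    (hθ : θ ∈ Set.Ioo 0 (Real.log (1 / q)))
    {Ω : Type*} [MeasurableSpace Ω] (μ : Measure Ω) [IsProbabilityMeasure μ]
    (A : ℕ → Ω → ℕ) (hmeas : ∀ k, Measurable (A k))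
    (hindep : iIndepFun A μ)
    (hdist : ∀ k j : ℕ, μ {ω | A k ω = j} =
      ENNReal.ofReal
        (Real.exp (-(q ^ (k + 1) * γ ^ 2)) * (q ^ (k + 1) * γ ^ 2) ^ j / Nat.factorial j)) :
    (∀ᵐ ω ∂μ, (∑' k : ℕ, (((k + 1) * A k ω : ℕ) : ℝ≥0∞)) < ⊤) ∧
    (∫ ω, Real.exp (θ * (∑' k : ℕ, (((k + 1) * A k ω : ℕ) : ℝ≥0∞)).toReal) ∂μ)
      = Real.exp (γ ^ 2 * (q * Real.exp θ / (1 - q * Real.exp θ) - q / (1 - q))) := by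
  obtain ⟨hq0, hq1⟩ := hq
  obtain ⟨hθ0, hθlog⟩ := hθ
  have hqe : q * Real.exp θ < 1 := by
    have h1q : (0:ℝ) < 1/q := by positivity
    have h2 : Real.exp θ < 1/q := by
      rw [← Real.exp_log h1q]; exact Real.exp_lt_exp.mpr hθlog
    calc q * Real.exp θ < q * (1/q) := by exact mul_lt_mul_of_pos_left h2 hq0
      _ = 1 := by field_simp
  have hqe0 : (0:ℝ) ≤ q * Real.exp θ := by positivity
  set m : ℕ → ℝ := fun k => q ^ (k+1) * γ^2 with hm_def
  have hm_pos : ∀ k, 0 < m k := fun k => by simp only [hm_def]; positivity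
  have hpmf_nonneg : ∀ k j, 0 ≤ Real.exp (-(m k)) * (m k) ^ j / (Nat.factorial j : ℝ) := by
    intro k j
    have := (hm_pos k).le
    positivity
  -- measurability
  have hfmeas : ∀ k, Measurable (fun ω => (((k+1) * A k ω : ℕ) : ℝ≥0∞)) := fun k =>
    (measurable_from_nat (f := fun n : ℕ => (((k+1) * n : ℕ) : ℝ≥0∞))).comp (hmeas k)
  have hSmeas : Measurable (fun ω => ∑' k, (((k+1) * A k ω : ℕ) : ℝ≥0∞)) :=
    Measurable.ennreal_tsum hfmeas
  -- mean of each term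
  have hmean : ∀ k, ∫⁻ ω, (((k+1) * A k ω : ℕ) : ℝ≥0∞) ∂μ
      = ENNReal.ofReal (((k:ℝ)+1) * m k) := by
    intro k
    rw [aux_lintegral_comp_nat μ (A k) (hmeas k) (fun j => (((k+1) * j : ℕ) : ℝ≥0∞))]
    simp_rw [hdist]
    have hsum : HasSum (fun j : ℕ =>
        ((((k+1) * j : ℕ) : ℝ)) * (Real.exp (-(m k)) * (m k) ^ j / (j.factorial : ℝ)))
        (((k:ℝ)+1) * m k) := by
      have h := (aux_poisson_mean (m k)).mul_left ((k:ℝ)+1)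
      convert h using 2 with j
      · rfl
      push_cast; ring
    rw [← aux_tsum_ofReal hsum (fun j => mul_nonneg (Nat.cast_nonneg _) (hpmf_nonneg k j))]
    refine tsum_congr fun j => ?_
    rw [← ENNReal.ofReal_natCast ((k+1)*j), ← ENNReal.ofReal_mul (Nat.cast_nonneg _)]
  -- a.s. finiteness
  have hsummable : Summable (fun k : ℕ => ((k:ℝ)+1) * m k) := by
    have h1 : Summable (fun n : ℕ => (n:ℝ) * q ^ n) := by
      have := summable_pow_mul_geometric_of_norm_lt_one (R := ℝ) 1
        (r := q) (by rw [Real.norm_eq_abs, abs_of_pos hq0]; exact hq1)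
      simpa using this
    have h2 : Summable (fun k : ℕ => ((k:ℝ)+1) * q ^ (k+1)) := by
      have h := (_root_.summable_nat_add_iff (f := fun n : ℕ => (n:ℝ) * q ^ n) 1).mpr h1
      refine h.congr fun k => ?_
      push_cast; ring
    have h3 := h2.mul_right (γ^2)
    refine h3.congr fun k => ?_
    simp only [hm_def]; ring
  have hlS : ∫⁻ ω, (∑' k, (((k+1) * A k ω : ℕ) : ℝ≥0∞)) ∂μ ≠ ⊤ := by
    rw [lintegral_tsum (fun k => (hfmeas k).aemeasurable)]
    simp_rw [hmean]
    rw [← ENNReal.ofReal_tsum_of_nonneg (fun k => mul_nonneg (by positivity) (hm_pos k).le) hsummable]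
    exact ENNReal.ofReal_ne_top
  have hae : ∀ᵐ ω ∂μ, (∑' k, (((k+1) * A k ω : ℕ) : ℝ≥0∞)) < ⊤ := ae_lt_top hSmeas hlS
  refine ⟨hae, ?_⟩
  -- the exponential factors
  set c : ℕ → ℝ := fun k => m k * (Real.exp (θ * ((k:ℝ)+1)) - 1) with hc_def
  have hc_nonneg : ∀ k, 0 ≤ c k := by
    intro k
    have h1 : (1:ℝ) ≤ Real.exp (θ * ((k:ℝ)+1)) := Real.one_le_exp (by positivity)
    exact mul_nonneg (hm_pos k).le (by linarith)
  set g : ℕ → ℕ → ℝ≥0∞ :=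
    fun k j => ENNReal.ofReal (Real.exp (θ * (((k+1) * j : ℕ) : ℝ))) with hg_def
  set X : ℕ → Ω → ℝ≥0∞ := fun k ω => g k (A k ω) with hX_def
  have hXmeas : ∀ k, Measurable (X k) := fun k =>
    (measurable_from_nat (f := g k)).comp (hmeas k)
  have hXindep : iIndepFun X μ :=
    hindep.comp g (fun _ => measurable_from_nat)
  have hXint : ∀ k, ∫⁻ ω, X k ω ∂μ = ENNReal.ofReal (Real.exp (c k)) := by
    intro k
    rw [show (∫⁻ ω, X k ω ∂μ) = ∫⁻ ω, g k (A k ω) ∂μ from rfl,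
      aux_lintegral_comp_nat μ (A k) (hmeas k) (g k)]
    simp_rw [hdist]
    have hsum : HasSum (fun j : ℕ =>
        Real.exp (θ * (((k+1) * j : ℕ) : ℝ)) * (Real.exp (-(m k)) * (m k) ^ j / (j.factorial : ℝ)))
        (Real.exp (c k)) := by
      have h := aux_poisson_mgf (m k) (θ * ((k:ℝ)+1))
      convert h using 2 with j
      congr 1
      push_cast; ring
    rw [← aux_tsum_ofReal hsum (fun j => mul_nonneg (Real.exp_nonneg _) (hpmf_nonneg k j))]
    exact tsum_congr fun j => (ENNReal.ofReal_mul (Real.exp_nonneg _)).symm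
  -- product over finite ranges
  have hprod : ∀ n, ∫⁻ ω, ∏ k ∈ Finset.range n, X k ω ∂μ
      = ∏ k ∈ Finset.range n, ENNReal.ofReal (Real.exp (c k)) := by
    intro n
    induction n with
    | zero => simp
    | succ n ih =>
      have hPm : Measurable (fun ω => ∏ k ∈ Finset.range n, X k ω) :=
        Finset.measurable_prod _ (fun i _ => hXmeas i)
      have hind : IndepFun (fun ω => ∏ k ∈ Finset.range n, X k ω) (X n) μ := by
        have h := hXindep.indepFun_prod_range_succ hXmeas n
        rwa [Finset.prod_fn] at h
      calc ∫⁻ ω, ∏ k ∈ Finset.range (n+1), X k ω ∂μ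
          = ∫⁻ ω, (∏ k ∈ Finset.range n, X k ω) * X n ω ∂μ := by
            simp_rw [Finset.prod_range_succ]
        _ = (∫⁻ ω, ∏ k ∈ Finset.range n, X k ω ∂μ) * ∫⁻ ω, X n ω ∂μ :=
            lintegral_mul_eq_lintegral_mul_lintegral_of_indepFun''
              hPm.aemeasurable (hXmeas n).aemeasurable hind
        _ = ∏ k ∈ Finset.range (n+1), ENNReal.ofReal (Real.exp (c k)) := by
            rw [ih, hXint n, Finset.prod_range_succ]
  -- partial real sums
  set R : ℕ → Ω → ℝ := fun n ω => ∑ k ∈ Finset.range n, (((k+1) * A k ω : ℕ) : ℝ) with hR_def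
  have hprod_eq : ∀ n ω, ∏ k ∈ Finset.range n, X k ω = ENNReal.ofReal (Real.exp (θ * R n ω)) := by
    intro n ω
    rw [hR_def]
    simp only [Finset.mul_sum]
    rw [Real.exp_sum, ENNReal.ofReal_prod_of_nonneg (fun i _ => Real.exp_nonneg _)]
  have hRmono : ∀ ω, Monotone fun n => R n ω := by
    intro ω a b hab
    exact Finset.sum_le_sum_of_subset_of_nonneg (Finset.range_subset_range.mpr hab)
      (fun i _ _ => Nat.cast_nonneg _)
  have hmono : Monotone fun (n : ℕ) (ω : Ω) => ENNReal.ofReal (Real.exp (θ * R n ω)) :=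
    fun a b hab ω => ENNReal.ofReal_le_ofReal
      (Real.exp_le_exp.mpr (mul_le_mul_of_nonneg_left (hRmono ω hab) hθ0.le))
  have hRm : ∀ n, Measurable (R n) := fun n =>
    Finset.measurable_sum _ (fun i _ =>
      (measurable_from_nat (f := fun n : ℕ => (((i+1) * n : ℕ) : ℝ))).comp (hmeas i))
  have hXnmeas : ∀ n, Measurable fun ω => ENNReal.ofReal (Real.exp (θ * R n ω)) := fun n =>
    ENNReal.measurable_ofReal.comp (Real.measurable_exp.comp ((hRm n).const_mul θ))
  -- summability of c and its sum
  have hck : ∀ k, c k = γ^2 * (q * Real.exp θ)^(k+1) - γ^2 * q^(k+1) := by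
    intro k
    have h1 : θ * ((k:ℝ)+1) = ((k+1 : ℕ) : ℝ) * θ := by push_cast; ring
    rw [hc_def]
    simp only [hm_def]
    rw [h1, Real.exp_nat_mul, mul_pow]
    ring
  have hcsum : HasSum c (γ^2 * (q * Real.exp θ / (1 - q * Real.exp θ)) - γ^2 * (q / (1-q))) := by
    have h1 := (aux_geom hqe0 hqe).mul_left (γ^2)
    have h2 := (aux_geom hq0.le hq1).mul_left (γ^2)
    have hce : c = fun k => γ^2 * (q * Real.exp θ)^(k+1) - γ^2 * q^(k+1) := funext hck
    rw [hce]
    exact h1.sub h2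
  -- key lintegral computation
  have hkey : ∫⁻ ω, ENNReal.ofReal
        (Real.exp (θ * (∑' k : ℕ, (((k + 1) * A k ω : ℕ) : ℝ≥0∞)).toReal)) ∂μ
      = ENNReal.ofReal (Real.exp (∑' k, c k)) := by
    have hae' : ∀ᵐ ω ∂μ, ENNReal.ofReal
        (Real.exp (θ * (∑' k : ℕ, (((k + 1) * A k ω : ℕ) : ℝ≥0∞)).toReal))
        = ⨆ n, ENNReal.ofReal (Real.exp (θ * R n ω)) := by
      filter_upwards [hae] with ω hω
      have htoReal : ∀ n, (∑ k ∈ Finset.range n, (((k+1) * A k ω : ℕ) : ℝ≥0∞)).toReal = R n ω := by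
        intro n
        rw [ENNReal.toReal_sum (fun a _ => ENNReal.natCast_ne_top _)]
        exact Finset.sum_congr rfl fun k _ => ENNReal.toReal_natCast _
      have htend : Tendsto (fun n => R n ω) atTop
          (nhds ((∑' k : ℕ, (((k + 1) * A k ω : ℕ) : ℝ≥0∞)).toReal)) := by
        have h1 := ENNReal.tendsto_nat_tsum (fun k : ℕ => (((k+1) * A k ω : ℕ) : ℝ≥0∞))
        have h2 := (ENNReal.tendsto_toReal hω.ne).comp h1
        refine h2.congr fun n => htoReal n
      have h3 : Tendsto (fun n => ENNReal.ofReal (Real.exp (θ * R n ω))) atTop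
          (nhds (ENNReal.ofReal
            (Real.exp (θ * (∑' k : ℕ, (((k + 1) * A k ω : ℕ) : ℝ≥0∞)).toReal)))) := by
        exact (ENNReal.continuous_ofReal.tendsto _).comp
          ((Real.continuous_exp.tendsto _).comp (htend.const_mul θ))
      exact (aux_iSup_eq (fun a b hab => hmono hab ω) h3).symm
    rw [lintegral_congr_ae hae', lintegral_iSup hXnmeas hmono]
    have hn : ∀ n, ∫⁻ ω, ENNReal.ofReal (Real.exp (θ * R n ω)) ∂μ
        = ENNReal.ofReal (Real.exp (∑ k ∈ Finset.range n, c k)) := by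
      intro n
      have h1 : (fun ω => ENNReal.ofReal (Real.exp (θ * R n ω)))
          = fun ω => ∏ k ∈ Finset.range n, X k ω := funext fun ω => (hprod_eq n ω).symm
      rw [h1, hprod n, ← ENNReal.ofReal_prod_of_nonneg (fun i _ => Real.exp_nonneg _),
        ← Real.exp_sum]
    simp_rw [hn]
    rw [hcsum.tsum_eq]
    refine aux_iSup_eq ?_ ?_
    · intro a b hab
      refine ENNReal.ofReal_le_ofReal (Real.exp_le_exp.mpr ?_)
      exact Finset.sum_le_sum_of_subset_of_nonneg (Finset.range_subset_range.mpr hab)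
        (fun i _ _ => hc_nonneg i)
    · exact (ENNReal.continuous_ofReal.tendsto _).comp
        ((Real.continuous_exp.tendsto _).comp hcsum.tendsto_sum_nat)
  -- convert Bochner integral to lintegral
  have hmeasRHS : AEStronglyMeasurable
      (fun ω => Real.exp (θ * (∑' k : ℕ, (((k + 1) * A k ω : ℕ) : ℝ≥0∞)).toReal)) μ :=
    (Real.measurable_exp.comp ((ENNReal.measurable_toReal.comp hSmeas).const_mul θ)).aestronglyMeasurable
  rw [integral_eq_lintegral_of_nonneg_ae (Filter.Eventually.of_forall fun ω => Real.exp_nonneg _)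
    hmeasRHS, hkey, ENNReal.toReal_ofReal (Real.exp_nonneg _)]
  congr 1
  rw [hcsum.tsum_eq]
  ring
end
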